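/- No backtracking for quasigeodesics in hyperbolic spaces (Lemma 'no backtracking hyper'): For every L ≥ 1 and δ ≥ 0 there exists M = M(L, δ) > 0 such that the following holds. Let X be a geodesic δ-hyperbolic metric space, let a ≥ 0, let q : [0, a] → X be an (L,L)-quasigeodesic, and let t ∈ [0, a] satisfy d(q(0), q(t)) + 1 ≥ diam(q([0, a])). Then a − t < M. -/

import Mathlib

/-- A geodesic from `x` to `y`, parameterized by arclength on `[0, dist x y]`. -/
def IsGeodesicFrom {Y : Type*} [MetricSpace Y] (f : ℝ → Y) (x y : Y) : Prop :=
  f 0 = x ∧ f (dist x y) = y ∧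
    ∀ s ∈ Set.Icc (0 : ℝ) (dist x y), ∀ t ∈ Set.Icc (0 : ℝ) (dist x y),
      dist (f s) (f t) = |s - t|

/-- A geodesic metric space: any two points are joined by a geodesic. -/
def IsGeodesicSpace (Y : Type*) [MetricSpace Y] : Prop :=
  ∀ x y : Y, ∃ f : ℝ → Y, IsGeodesicFrom f x y

/-- δ-hyperbolicity: every geodesic triangle is δ-thin, i.e. each side is contained in
the δ-neighbourhood of the union of the other two sides. -/
def DeltaHyperbolic (δ : ℝ) (Y : Type*) [MetricSpace Y] : Prop :=
  ∀ x y z : Y, ∀ f g h : ℝ → Y,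
    IsGeodesicFrom f x y → IsGeodesicFrom g y z → IsGeodesicFrom h x z →
    ∀ s ∈ Set.Icc (0 : ℝ) (dist x y),
      ∃ p ∈ g '' Set.Icc (0 : ℝ) (dist y z) ∪ h '' Set.Icc (0 : ℝ) (dist x z),
        dist (f s) p ≤ δ

/-- An `(L, C)`-quasigeodesic defined on a subset `D ⊆ ℝ`. -/
def IsQGOn {Y : Type*} [MetricSpace Y] (L C : ℝ) (D : Set ℝ) (q : ℝ → Y) : Prop :=
  ∀ s ∈ D, ∀ t ∈ D,
    |s - t| / L - C ≤ dist (q s) (q t) ∧ dist (q s) (q t) ≤ L * |s - t| + C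

private lemma nb_two_mul_add_one_le {n : ℕ} (h : 4 ≤ n) : 2 * n + 1 ≤ 2 ^ n := by
  induction n with
  | zero => omega
  | succ m ih =>
    rcases Nat.lt_or_ge m 4 with hm | hm
    · have hm3 : m = 3 := by omega
      subst hm3; norm_num
    · have h2 : (2:ℕ) ≤ 2 ^ m :=
        le_trans (by norm_num : (2:ℕ) ≤ 2^1) (Nat.pow_le_pow_right (by norm_num) (by omega))
      have h1 := ih hm
      calc 2 * (m+1) + 1 = (2*m+1) + 2 := by ring
      _ ≤ 2^m + 2^m := Nat.add_le_add h1 h2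
      _ = 2^(m+1) := by rw [pow_succ]; ring

private lemma nb_sq_le_two_pow {n : ℕ} (h : 4 ≤ n) : n ^ 2 ≤ 2 ^ n := by
  induction n with
  | zero => omega
  | succ m ih =>
    rcases Nat.lt_or_ge m 4 with hm | hm
    · have hm3 : m = 3 := by omega
      subst hm3; norm_num
    · have h1 := ih hm
      have h2 := nb_two_mul_add_one_le hm
      calc (m+1)^2 = m^2 + (2*m+1) := by ring
      _ ≤ 2^m + 2^m := Nat.add_le_add h1 h2
      _ = 2^(m+1) := by rw [pow_succ]; ring

private lemma nb_chain_concat {X : Type*} [MetricSpace X] (c : ℝ) (z₁ z₂ : ℕ → X) (n₁ n₂ : ℕ)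
    (h₁ : ∀ i < n₁, dist (z₁ i) (z₁ (i+1)) ≤ c) (h₂ : ∀ i < n₂, dist (z₂ i) (z₂ (i+1)) ≤ c)
    (hjoin : z₁ n₁ = z₂ 0) :
    ∃ Z : ℕ → X, Z 0 = z₁ 0 ∧ Z (n₁ + n₂) = z₂ n₂ ∧
      (∀ i < n₁ + n₂, dist (Z i) (Z (i+1)) ≤ c) ∧
      (∀ i ≤ n₁ + n₂, (∃ j ≤ n₁, Z i = z₁ j) ∨ ∃ j ≤ n₂, Z i = z₂ j) := by
  refine ⟨fun i => if i ≤ n₁ then z₁ i else z₂ (i - n₁), by simp, ?_, ?_, ?_⟩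
  · by_cases h : n₁ + n₂ ≤ n₁
    · have hn2 : n₂ = 0 := by omega
      simp [h, hn2, hjoin]
    · simp only [if_neg h]
      congr 1
      omega
  · intro i hi
    by_cases ha : i + 1 ≤ n₁
    · have hb : i ≤ n₁ := by omega
      simp only [if_pos ha, if_pos hb]
      exact h₁ i (by omega)
    · by_cases hb : i ≤ n₁
      · have hin : i = n₁ := by omega
        subst hin
        show dist (if i ≤ i then z₁ i else z₂ (i - i))
            (if i + 1 ≤ i then z₁ (i+1) else z₂ (i + 1 - i)) ≤ c
        rw [if_pos le_rfl, if_neg ha, hjoin]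
        have h1 : i + 1 - i = 1 := by omega
        rw [h1]
        exact h₂ 0 (by omega)
      · simp only [if_neg ha, if_neg hb]
        have h1 : i + 1 - n₁ = (i - n₁) + 1 := by omega
        rw [h1]
        exact h₂ (i - n₁) (by omega)
  · intro i hi
    by_cases hb : i ≤ n₁
    · exact Or.inl ⟨i, hb, by simp [hb]⟩
    · exact Or.inr ⟨i - n₁, by omega, by simp [hb]⟩

private lemma nb_geo_chain {X : Type*} [MetricSpace X] {g : ℝ → X} {u w : X}
    (hg : IsGeodesicFrom g u w) :
    ∃ z : ℕ → X, z 0 = u ∧ z ⌈dist u w⌉₊ = w ∧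
      (∀ i < ⌈dist u w⌉₊, dist (z i) (z (i+1)) ≤ 1) ∧
      ∀ i ≤ ⌈dist u w⌉₊, ∃ ξ ∈ Set.Icc (0:ℝ) (dist u w), z i = g ξ := by
  obtain ⟨hg0, hg1, hiso⟩ := hg
  have hd : (0:ℝ) ≤ dist u w := dist_nonneg
  have hmem : ∀ x : ℝ, 0 ≤ x → min x (dist u w) ∈ Set.Icc (0:ℝ) (dist u w) :=
    fun x hx => ⟨le_min hx hd, min_le_right _ _⟩
  refine ⟨fun j => g (min (j:ℝ) (dist u w)), ?_, ?_, ?_, ?_⟩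
  · show g (min ((0:ℕ):ℝ) (dist u w)) = u
    rw [Nat.cast_zero, min_eq_left hd, hg0]
  · show g (min ((⌈dist u w⌉₊:ℕ):ℝ) (dist u w)) = w
    rw [min_eq_right (Nat.le_ceil _), hg1]
  · intro i _
    show dist (g (min ((i:ℕ):ℝ) (dist u w))) (g (min ((i+1:ℕ):ℝ) (dist u w))) ≤ 1
    have hc : ((i+1:ℕ):ℝ) = (i:ℝ)+1 := by push_cast; ring
    rw [hc, hiso _ (hmem _ (by positivity)) _ (hmem _ (by positivity))]
    have h1 : min ((i:ℝ)) (dist u w) ≤ min ((i:ℝ)+1) (dist u w) :=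
      min_le_min (by linarith) le_rfl
    have h2 : min ((i:ℝ)+1) (dist u w) ≤ min ((i:ℝ)) (dist u w) + 1 := by
      rcases le_total ((i:ℝ)+1) (dist u w) with h | h
      · rw [min_eq_left h, min_eq_left (by linarith : (i:ℝ) ≤ dist u w)]
      · rw [min_eq_right h]
        rcases le_total ((i:ℝ)) (dist u w) with h' | h'
        · rw [min_eq_left h']; linarith
        · rw [min_eq_right h']; linarith
    rw [abs_le]
    constructor <;> linarith
  · intro i _
    exact ⟨_, hmem _ (by positivity), rfl⟩

private lemma nb_qg_chain {X : Type*} [MetricSpace X] {L : ℝ} (hL : 1 ≤ L) {α ω : ℝ}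
    {q : ℝ → X} (hq : IsQGOn L L (Set.Icc α ω) q) {s₁ s₂ : ℝ}
    (hs₁ : s₁ ∈ Set.Icc α ω) (hs₂ : s₂ ∈ Set.Icc α ω) :
    ∃ z : ℕ → X, ∃ n : ℕ, 1 ≤ n ∧ z 0 = q s₁ ∧ z n = q s₂ ∧ ((n:ℝ) ≤ |s₂ - s₁| + 2) ∧
      (∀ i < n, dist (z i) (z (i+1)) ≤ 2*L) ∧
      ∀ i ≤ n, ∃ s ∈ Set.Icc α ω, z i = q s := by
  set n : ℕ := ⌈|s₂ - s₁|⌉₊ + 1 with hn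
  have hn0 : (0:ℝ) < (n:ℝ) := by positivity
  set p : ℕ → ℝ := fun j => s₁ + ((min j n : ℕ) : ℝ) * (s₂ - s₁) / n with hp
  have hpmem : ∀ j : ℕ, p j ∈ Set.Icc α ω := by
    intro j
    have h0 : (0:ℝ) ≤ ((min j n : ℕ) : ℝ) / n := by positivity
    have h1 : ((min j n : ℕ) : ℝ) / n ≤ 1 := by
      rw [div_le_one hn0]
      exact_mod_cast Nat.min_le_right j n
    have hθ : p j = s₁ + (((min j n : ℕ) : ℝ)/n) * (s₂ - s₁) := by
      rw [hp]; ring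
    constructor
    · rw [hθ]
      nlinarith [hs₁.1, hs₂.1, mul_nonneg h0 (sub_nonneg.mpr hs₁.1)]
    · rw [hθ]
      nlinarith [hs₁.2, hs₂.2, mul_nonneg h0 (sub_nonneg.mpr hs₁.1)]
  have hgap : ∀ i : ℕ, |p (i+1) - p i| ≤ 1 := by
    intro i
    have hmono : (min i n : ℕ) ≤ (min (i+1) n : ℕ) := by omega
    have hle : (min (i+1) n : ℕ) ≤ (min i n : ℕ) + 1 := by omega
    have hdiff : p (i+1) - p i = (((min (i+1) n : ℕ):ℝ) - ((min i n : ℕ):ℝ)) * (s₂ - s₁) / n := by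
      rw [hp]; ring
    have h01 : (0:ℝ) ≤ ((min (i+1) n : ℕ):ℝ) - ((min i n : ℕ):ℝ) := by
      have : ((min i n : ℕ):ℝ) ≤ ((min (i+1) n : ℕ):ℝ) := by exact_mod_cast hmono
      linarith
    have h02 : ((min (i+1) n : ℕ):ℝ) - ((min i n : ℕ):ℝ) ≤ 1 := by
      have : ((min (i+1) n : ℕ):ℝ) ≤ ((min i n : ℕ):ℝ) + 1 := by exact_mod_cast hle
      linarith
    have habs : |s₂ - s₁| ≤ (n:ℝ) := by
      have := Nat.le_ceil |s₂ - s₁|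
      have hcast : ((⌈|s₂ - s₁|⌉₊ : ℕ):ℝ) ≤ (n:ℝ) := by exact_mod_cast Nat.le_succ _
      linarith
    rw [hdiff, abs_div, abs_mul, abs_of_nonneg h01, abs_of_pos hn0]
    rw [div_le_one hn0]
    nlinarith [abs_nonneg (s₂ - s₁)]
  refine ⟨fun j => q (p j), n, by omega, ?_, ?_, ?_, ?_, ?_⟩
  · show q (p 0) = q s₁
    have : p 0 = s₁ := by simp [hp]
    rw [this]
  · show q (p n) = q s₂
    have : p n = s₂ := by
      rw [hp]
      simp only [min_self]
      field_simp
      ring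
    rw [this]
  · have := Nat.ceil_lt_add_one (abs_nonneg (s₂ - s₁))
    rw [hn]
    push_cast
    linarith
  · intro i _
    have h2 := (hq (p i) (hpmem i) (p (i+1)) (hpmem (i+1))).2
    have : |p i - p (i+1)| ≤ 1 := by rw [abs_sub_comm]; exact hgap i
    calc dist (q (p i)) (q (p (i+1))) ≤ L * |p i - p (i+1)| + L := h2
    _ ≤ L * 1 + L := by nlinarith [this, abs_nonneg (p i - p (i+1))]
    _ ≤ 2 * L := by linarith
  · intro i _
    exact ⟨p i, hpmem i, rfl⟩

private lemma nb_chain_lemma {X : Type*} [MetricSpace X] {δ : ℝ} (hδ : 0 ≤ δ)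
    (hgeo : IsGeodesicSpace X) (hhyp : DeltaHyperbolic δ X) (c : ℝ) :
    ∀ k n : ℕ, 1 ≤ n → n ≤ 2^k → ∀ z : ℕ → X,
      (∀ i < n, dist (z i) (z (i+1)) ≤ c) →
      ∀ f : ℝ → X, IsGeodesicFrom f (z 0) (z n) →
      ∀ σ ∈ Set.Icc (0:ℝ) (dist (z 0) (z n)),
      ∃ i ≤ n, dist (f σ) (z i) ≤ δ * k + c := by
  have base : ∀ z : ℕ → X, (∀ i < 1, dist (z i) (z (i+1)) ≤ c) →
      ∀ f : ℝ → X, IsGeodesicFrom f (z 0) (z 1) →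
      ∀ σ ∈ Set.Icc (0:ℝ) (dist (z 0) (z 1)), dist (f σ) (z 0) ≤ c := by
    intro z hz f hf σ hσ
    obtain ⟨hf0, hf1, hiso⟩ := hf
    have h0 : (0:ℝ) ∈ Set.Icc (0:ℝ) (dist (z 0) (z 1)) := ⟨le_rfl, dist_nonneg⟩
    have : dist (f σ) (f 0) = |σ - 0| := hiso σ hσ 0 h0
    rw [hf0] at this
    rw [this, sub_zero, abs_of_nonneg hσ.1]
    exact le_trans hσ.2 (hz 0 (by omega))
  intro k
  induction k with
  | zero =>
    intro n h1 h2 z hz f hf σ hσ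
    have hn1 : n = 1 := by simpa using Nat.le_antisymm h2 h1
    subst hn1
    exact ⟨0, by omega, by
      simpa using le_trans (base z hz f hf σ hσ) (by simp)⟩
  | succ k ih =>
    intro n h1 h2 z hz f hf σ hσ
    rcases eq_or_lt_of_le h1 with hn1 | hn2
    · have hn1' : n = 1 := hn1.symm
      subst hn1'
      refine ⟨0, by omega, le_trans (base z hz f hf σ hσ) ?_⟩
      have : (0:ℝ) ≤ δ * (k+1:ℕ) := by positivity
      linarith
    · -- n ≥ 2
      have hn2' : 2 ≤ n := hn2
      set k' : ℕ := (n+1)/2 with hk'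
      have hk'1 : 1 ≤ k' := by omega
      have hk'n : k' ≤ n - 1 := by omega
      have hpow : 2^(k+1) = 2 * 2^k := by rw [pow_succ]; ring
      have hk'2 : k' ≤ 2^k := by omega
      have hnk'2 : n - k' ≤ 2^k := by omega
      have hnk'1 : 1 ≤ n - k' := by omega
      obtain ⟨g, hg⟩ := hgeo (z n) (z k')
      obtain ⟨h, hh⟩ := hgeo (z 0) (z k')
      obtain ⟨p, hp, hdp⟩ := hhyp (z 0) (z n) (z k') f g h hf hg hh σ hσ
      rcases hp with hpg | hph
      · -- p on geodesic from z n to z k'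
        obtain ⟨σ', hσ', rfl⟩ := hpg
        set w : ℕ → X := fun j => z (n - j) with hw
        have hwgap : ∀ i < n - k', dist (w i) (w (i+1)) ≤ c := by
          intro i hi
          show dist (z (n - i)) (z (n - (i+1))) ≤ c
          have he : n - i = (n - (i+1)) + 1 := by omega
          rw [dist_comm, he]
          exact hz (n - (i+1)) (by omega)
        have hw0 : w 0 = z n := by simp [hw]
        have hwend : w (n - k') = z k' := by
          show z (n - (n - k')) = z k'
          congr 1
          omega
        have hgw : IsGeodesicFrom g (w 0) (w (n - k')) := by
          rw [hw0, hwend]; exact hg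
        have hσ'w : σ' ∈ Set.Icc (0:ℝ) (dist (w 0) (w (n - k'))) := by
          rw [hw0, hwend]; exact hσ'
        obtain ⟨i, hi, hdi⟩ := ih (n - k') hnk'1 hnk'2 w hwgap g hgw σ' hσ'w
        refine ⟨n - i, by omega, ?_⟩
        have : dist (f σ) (z (n - i)) ≤ dist (f σ) (g σ') + dist (g σ') (z (n - i)) :=
          dist_triangle _ _ _
        have hwi : dist (g σ') (w i) = dist (g σ') (z (n - i)) := rfl
        rw [hwi] at hdi
        push_cast
        push_cast at hdi
        linarith
      · -- p on geodesic from z 0 to z k'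
        obtain ⟨σ', hσ', rfl⟩ := hph
        have hzgap : ∀ i < k', dist (z i) (z (i+1)) ≤ c := fun i hi => hz i (by omega)
        obtain ⟨i, hi, hdi⟩ := ih k' hk'1 hk'2 z hzgap h hh σ' hσ'
        refine ⟨i, by omega, ?_⟩
        have : dist (f σ) (z i) ≤ dist (f σ) (h σ') + dist (h σ') (z i) :=
          dist_triangle _ _ _
        push_cast
        push_cast at hdi
        linarith

/-- Explicit constant for `nb_geodesic_near_qg`. -/
noncomputable def nbR (L δ : ℝ) : ℝ :=
  2*δ*((2*δ*(6*L+2)) + ((6*L+2)*(2*δ+4*L+1) + (L^2+2*L+6)) + 5) + 4*L + 1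

private lemma nbR_nonneg {L δ : ℝ} (hL : 1 ≤ L) (hδ : 0 ≤ δ) : 0 ≤ nbR L δ := by
  have hL0 : (0:ℝ) ≤ L := by linarith
  have h1 : (0:ℝ) ≤ 6*L+2 := by linarith
  have h2 : (0:ℝ) ≤ 2*δ+4*L+1 := by linarith
  have h3 : (0:ℝ) ≤ L^2+2*L+6 := by nlinarith [sq_nonneg L]
  have h4 : (0:ℝ) ≤ 2*δ := by linarith
  have h5 : (0:ℝ) ≤ 2*δ*(6*L+2) := mul_nonneg h4 h1
  have h6 : (0:ℝ) ≤ (6*L+2)*(2*δ+4*L+1) := mul_nonneg h1 h2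
  have h7 : (0:ℝ) ≤ (2*δ*(6*L+2)) + ((6*L+2)*(2*δ+4*L+1) + (L^2+2*L+6)) + 5 := by linarith
  have h8 : (0:ℝ) ≤ 2*δ*((2*δ*(6*L+2)) + ((6*L+2)*(2*δ+4*L+1) + (L^2+2*L+6)) + 5) :=
    mul_nonneg h4 h7
  unfold nbR
  linarith

set_option maxHeartbeats 1600000 in
private lemma nb_geodesic_near_qg {X : Type*} [MetricSpace X] {L δ : ℝ} (hL : 1 ≤ L) (hδ : 0 ≤ δ)
    (hgeo : IsGeodesicSpace X) (hhyp : DeltaHyperbolic δ X) {α ω : ℝ} (hαω : α ≤ ω)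
    {q : ℝ → X} (hq : IsQGOn L L (Set.Icc α ω) q) {f : ℝ → X}
    (hf : IsGeodesicFrom f (q α) (q ω)) :
    ∀ σ ∈ Set.Icc (0:ℝ) (dist (q α) (q ω)), ∃ s ∈ Set.Icc α ω,
      dist (f σ) (q s) ≤ nbR L δ + 1 := by
  have hL0 : (0:ℝ) < L := by linarith
  obtain ⟨hf0, hf1, hfiso⟩ := hf
  set K : Set X := q '' Set.Icc α ω with hK
  have hKne : K.Nonempty := ⟨q α, Set.mem_image_of_mem _ ⟨le_rfl, hαω⟩⟩
  set dω : ℝ := dist (q α) (q ω) with hdω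
  have hdω0 : 0 ≤ dω := dist_nonneg
  -- continuity of the distance-to-K function along f
  have hlip : LipschitzOnWith 1 f (Set.Icc 0 dω) := by
    apply LipschitzOnWith.of_dist_le_mul
    intro x hx y hy
    rw [hfiso x hx y hy, Real.dist_eq, NNReal.coe_one, one_mul]
  have hcont : ContinuousOn (fun σ => Metric.infDist (f σ) K) (Set.Icc 0 dω) :=
    (Metric.continuous_infDist_pt K).comp_continuousOn hlip.continuousOn
  obtain ⟨σs, hσs, hmax⟩ := isCompact_Icc.exists_isMaxOn (Set.nonempty_Icc.mpr hdω0) hcont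
  set ρ : ℝ := Metric.infDist (f σs) K with hρ
  have hmax' : ∀ σ ∈ Set.Icc (0:ℝ) dω, Metric.infDist (f σ) K ≤ ρ := fun σ hσ => hmax hσ
  have hρ0 : 0 ≤ ρ := Metric.infDist_nonneg
  -- the key claim: ρ ≤ nbR L δ
  suffices hkey : ρ ≤ nbR L δ by
    intro σ hσ
    have h1 : Metric.infDist (f σ) K < nbR L δ + 1 := lt_of_le_of_lt (hmax' σ hσ) (by linarith)
    obtain ⟨y, hy, hdy⟩ := (Metric.infDist_lt_iff hKne).mp h1
    obtain ⟨s, hs, rfl⟩ := hy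
    exact ⟨s, hs, le_of_lt hdy⟩
  -- distances from m := f σs to points of K are ≥ ρ
  have hKdist : ∀ y ∈ K, ρ ≤ dist (f σs) y := fun y hy => Metric.infDist_le_dist_of_mem hy
  -- σs is at distance ≥ ρ from both ends
  have hσsl : ρ ≤ σs := by
    have h0 : (0:ℝ) ∈ Set.Icc (0:ℝ) dω := ⟨le_rfl, hdω0⟩
    have := hKdist (q α) (Set.mem_image_of_mem _ ⟨le_rfl, hαω⟩)
    rw [← hf0, hfiso σs hσs 0 h0, sub_zero, abs_of_nonneg hσs.1] at this
    exact this
  have hσsr : ρ ≤ dω - σs := by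
    have h0 : dω ∈ Set.Icc (0:ℝ) dω := ⟨hdω0, le_rfl⟩
    have := hKdist (q ω) (Set.mem_image_of_mem _ ⟨hαω, le_rfl⟩)
    rw [← hf1, hfiso σs hσs dω h0, abs_sub_comm, abs_of_nonneg (by linarith [hσs.2])] at this
    linarith [this]
  set σy : ℝ := max 0 (σs - 2*ρ) with hσy
  set σz : ℝ := min dω (σs + 2*ρ) with hσz
  have hσy0 : 0 ≤ σy := le_max_left _ _
  have hσys : σy ≤ σs := max_le hσs.1 (by linarith)
  have hσzs : σs ≤ σz := le_min hσs.2 (by linarith)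
  have hσzω : σz ≤ dω := min_le_left _ _
  have hσymem : σy ∈ Set.Icc (0:ℝ) dω := ⟨hσy0, le_trans hσys hσs.2⟩
  have hσzmem : σz ∈ Set.Icc (0:ℝ) dω := ⟨le_trans hσs.1 hσzs, hσzω⟩
  have hdmy : dist (f σs) (f σy) = σs - σy := by
    rw [hfiso σs hσs σy hσymem, abs_of_nonneg (by linarith)]
  have hdmz : dist (f σs) (f σz) = σz - σs := by
    rw [hfiso σs hσs σz hσzmem, abs_sub_comm, abs_of_nonneg (by linarith)]
  have hdmyρ : ρ ≤ dist (f σs) (f σy) := by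
    rw [hdmy]
    rcases le_total (σs - 2*ρ) 0 with h | h
    · rw [hσy, max_eq_left h]; linarith
    · rw [hσy, max_eq_right h]; linarith
  have hdmzρ : ρ ≤ dist (f σs) (f σz) := by
    rw [hdmz]
    rcases le_total (σs + 2*ρ) dω with h | h
    · rw [hσz, min_eq_right h]; linarith
    · rw [hσz, min_eq_left h]; linarith
  have hdmy2 : dist (f σs) (f σy) ≤ 2*ρ := by
    rw [hdmy]
    rcases le_total (σs - 2*ρ) 0 with h | h
    · rw [hσy, max_eq_left h]; linarith
    · rw [hσy, max_eq_right h]; linarith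
  have hdmz2 : dist (f σs) (f σz) ≤ 2*ρ := by
    rw [hdmz]
    rcases le_total (σs + 2*ρ) dω with h | h
    · rw [hσz, min_eq_right h]; linarith
    · rw [hσz, min_eq_left h]; linarith
  -- nearby quasigeodesic points
  obtain ⟨x₁, hx₁K, hd₁'⟩ := (Metric.infDist_lt_iff hKne).mp
    (lt_of_le_of_lt (hmax' σy hσymem) (by linarith : ρ < ρ + 1))
  obtain ⟨s₁, hs₁, rfl⟩ := hx₁K
  obtain ⟨x₂, hx₂K, hd₂'⟩ := (Metric.infDist_lt_iff hKne).mp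
    (lt_of_le_of_lt (hmax' σz hσzmem) (by linarith : ρ < ρ + 1))
  obtain ⟨s₂, hs₂, rfl⟩ := hx₂K
  have hdyz : dist (f σy) (f σz) ≤ 4*ρ := by
    calc dist (f σy) (f σz) ≤ dist (f σy) (f σs) + dist (f σs) (f σz) := dist_triangle _ _ _
    _ ≤ 2*ρ + 2*ρ := by rw [dist_comm (f σy) (f σs)]; linarith
    _ = 4*ρ := by ring
  have hd12 : dist (q s₁) (q s₂) ≤ 6*ρ + 2 := by
    calc dist (q s₁) (q s₂) ≤ dist (q s₁) (f σy) + dist (f σy) (f σz) + dist (f σz) (q s₂) :=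
      dist_triangle4 _ _ _ _
    _ ≤ (ρ+1) + 4*ρ + (ρ+1) := by
        rw [dist_comm (q s₁) (f σy)]
        linarith
    _ = 6*ρ + 2 := by ring
  have hs12 : |s₂ - s₁| ≤ L*(6*ρ+2+L) := by
    have := (hq s₁ hs₁ s₂ hs₂).1
    rw [abs_sub_comm] at this
    have h2 : |s₂ - s₁| / L ≤ 6*ρ + 2 + L := by linarith
    calc |s₂ - s₁| = (|s₂ - s₁| / L) * L := by field_simp
    _ ≤ (6*ρ+2+L) * L := mul_le_mul_of_nonneg_right h2 (le_of_lt hL0)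
    _ = L*(6*ρ+2+L) := by ring
  -- build the chain from f σy to f σz
  obtain ⟨g₁, hg₁⟩ := hgeo (f σy) (q s₁)
  obtain ⟨g₃, hg₃⟩ := hgeo (q s₂) (f σz)
  obtain ⟨zA, hzA0, hzA1, hzAgap, hzAmem⟩ := nb_geo_chain hg₁
  obtain ⟨zC, hzC0, hzC1, hzCgap, hzCmem⟩ := nb_geo_chain hg₃
  obtain ⟨zB, nB, hnB1, hzB0, hzB1, hnBle, hzBgap, hzBmem⟩ := nb_qg_chain hL hq hs₁ hs₂
  set n₁ : ℕ := ⌈dist (f σy) (q s₁)⌉₊ with hn₁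
  set n₃ : ℕ := ⌈dist (q s₂) (f σz)⌉₊ with hn₃
  have h2L1 : (1:ℝ) ≤ 2*L := by linarith
  obtain ⟨Z₁, hZ₁0, hZ₁1, hZ₁gap, hZ₁mem⟩ := nb_chain_concat (2*L) zA zB n₁ nB
    (fun i hi => le_trans (hzAgap i hi) h2L1) hzBgap (by rw [hzA1, hzB0])
  obtain ⟨Z, hZ0, hZ1, hZgap, hZmem⟩ := nb_chain_concat (2*L) Z₁ zC (n₁ + nB) n₃
    hZ₁gap (fun i hi => le_trans (hzCgap i hi) h2L1) (by rw [hZ₁1, hzB1, hzC0])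
  set N : ℕ := n₁ + nB + n₃ with hN
  have hN1 : 1 ≤ N := by omega
  -- the restricted geodesic f' from f σy to f σz
  set f' : ℝ → X := fun σ => f (σy + σ) with hf'
  have hdyz' : dist (f σy) (f σz) = σz - σy := by
    rw [hfiso σy hσymem σz hσzmem, abs_sub_comm, abs_of_nonneg (by linarith)]
  have hf'geo : IsGeodesicFrom f' (f σy) (f σz) := by
    refine ⟨by simp [hf'], ?_, ?_⟩
    · show f (σy + dist (f σy) (f σz)) = f σz
      rw [hdyz']
      congr 1
      ring
    · intro u hu v hv
      rw [hdyz'] at hu hv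
      show dist (f (σy + u)) (f (σy + v)) = |u - v|
      have hum : σy + u ∈ Set.Icc (0:ℝ) dω := ⟨by linarith [hu.1], by linarith [hu.2]⟩
      have hvm : σy + v ∈ Set.Icc (0:ℝ) dω := ⟨by linarith [hv.1], by linarith [hv.2]⟩
      rw [hfiso _ hum _ hvm]
      congr 1
      ring
  have hZgeo : IsGeodesicFrom f' (Z 0) (Z N) := by
    rw [hZ0, hZ₁0, hzA0, hZ1, hzC1]
    exact hf'geo
  have hσmem' : σs - σy ∈ Set.Icc (0:ℝ) (dist (Z 0) (Z N)) := by
    rw [hZ0, hZ₁0, hzA0, hZ1, hzC1, hdyz']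
    exact ⟨by linarith, by linarith⟩
  set k : ℕ := Nat.clog 2 N with hk
  have hNk : N ≤ 2^k := Nat.le_pow_clog (by norm_num) N
  obtain ⟨i, hiN, hdi⟩ := nb_chain_lemma hδ hgeo hhyp (2*L) k N hN1 hNk Z hZgap f' hZgeo
    (σs - σy) hσmem'
  have hfσ : f' (σs - σy) = f σs := by
    show f (σy + (σs - σy)) = f σs
    congr 1
    ring
  rw [hfσ] at hdi
  -- every chain point is at distance ≥ (ρ-1)/2 from f σs
  have hlower : (ρ - 1)/2 ≤ dist (f σs) (Z i) := by
    have hd₁le : dist (f σy) (q s₁) ≤ ρ + 1 := le_of_lt hd₁'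
    have hd₃le : dist (q s₂) (f σz) ≤ ρ + 1 := by
      rw [dist_comm]; exact le_of_lt hd₂'
    rcases hZmem i (by omega) with hA | hC
    · obtain ⟨j, hj, hZe⟩ := hA
      rcases hZ₁mem j hj with hA' | hB'
      · -- on the connector geodesic g₁
        obtain ⟨j', hj', hZe'⟩ := hA'
        obtain ⟨ξ, hξ, hge⟩ := hzAmem j' hj'
        rw [hZe, hZe', hge]
        obtain ⟨hg₁0, hg₁1, hg₁iso⟩ := hg₁
        have h0m : (0:ℝ) ∈ Set.Icc (0:ℝ) (dist (f σy) (q s₁)) := ⟨le_rfl, dist_nonneg⟩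
        have hdm : dist (f σy) (q s₁) ∈ Set.Icc (0:ℝ) (dist (f σy) (q s₁)) :=
          ⟨dist_nonneg, le_rfl⟩
        have e1 : dist (g₁ ξ) (f σy) = ξ := by
          rw [← hg₁0, hg₁iso ξ hξ 0 h0m, sub_zero, abs_of_nonneg hξ.1]
        have e2 : dist (g₁ ξ) (q s₁) = dist (f σy) (q s₁) - ξ := by
          have h := hg₁iso ξ hξ _ hdm
          rw [hg₁1] at h
          rw [h, abs_sub_comm, abs_of_nonneg (by linarith [hξ.2])]
        have l1 : ρ - ξ ≤ dist (f σs) (g₁ ξ) := by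
          have := dist_triangle (f σs) (g₁ ξ) (f σy)
          rw [e1] at this
          linarith [hdmyρ]
        have l2 : ξ - 1 ≤ dist (f σs) (g₁ ξ) := by
          have ht := dist_triangle (f σs) (g₁ ξ) (q s₁)
          rw [e2] at ht
          have := hKdist (q s₁) (Set.mem_image_of_mem _ hs₁)
          linarith
        linarith
      · -- a quasigeodesic point
        obtain ⟨j', hj', hZe'⟩ := hB'
        obtain ⟨s, hs, hqe⟩ := hzBmem j' hj'
        rw [hZe, hZe', hqe]
        have := hKdist (q s) (Set.mem_image_of_mem _ hs)
        linarith
    · -- on the connector geodesic g₃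
      obtain ⟨j, hj, hZe⟩ := hC
      obtain ⟨ξ, hξ, hge⟩ := hzCmem j hj
      rw [hZe, hge]
      obtain ⟨hg₃0, hg₃1, hg₃iso⟩ := hg₃
      have h0m : (0:ℝ) ∈ Set.Icc (0:ℝ) (dist (q s₂) (f σz)) := ⟨le_rfl, dist_nonneg⟩
      have hdm : dist (q s₂) (f σz) ∈ Set.Icc (0:ℝ) (dist (q s₂) (f σz)) :=
        ⟨dist_nonneg, le_rfl⟩
      have e1 : dist (g₃ ξ) (q s₂) = ξ := by
        rw [← hg₃0, hg₃iso ξ hξ 0 h0m, sub_zero, abs_of_nonneg hξ.1]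
      have e2 : dist (g₃ ξ) (f σz) = dist (q s₂) (f σz) - ξ := by
        have h := hg₃iso ξ hξ _ hdm
        rw [hg₃1] at h
        rw [h, abs_sub_comm, abs_of_nonneg (by linarith [hξ.2])]
      have hd₃le : dist (q s₂) (f σz) ≤ ρ + 1 := by
        rw [dist_comm]; exact le_of_lt hd₂'
      have l1 : ρ - ξ ≤ dist (f σs) (g₃ ξ) := by
        have ht := dist_triangle (f σs) (g₃ ξ) (q s₂)
        rw [e1] at ht
        have := hKdist (q s₂) (Set.mem_image_of_mem _ hs₂)
        linarith
      have l2 : ξ - 1 ≤ dist (f σs) (g₃ ξ) := by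
        have ht := dist_triangle (f σs) (g₃ ξ) (f σz)
        rw [e2] at ht
        linarith [hdmzρ]
      linarith
  -- main inequality (A)
  have hA : (ρ - 1)/2 ≤ δ * k + 2*L := le_trans hlower hdi
  -- size bound (B)
  have hB : (N:ℝ) ≤ (6*L+2)*ρ + (L^2+2*L+6) := by
    have hn₁le : (n₁:ℝ) ≤ ρ + 2 := by
      have := Nat.ceil_lt_add_one (dist_nonneg : (0:ℝ) ≤ dist (f σy) (q s₁))
      have hd₁le : dist (f σy) (q s₁) ≤ ρ + 1 := le_of_lt hd₁'
      rw [← hn₁] at this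
      linarith
    have hn₃le : (n₃:ℝ) ≤ ρ + 2 := by
      have := Nat.ceil_lt_add_one (dist_nonneg : (0:ℝ) ≤ dist (q s₂) (f σz))
      have hd₃le : dist (q s₂) (f σz) ≤ ρ + 1 := by rw [dist_comm]; exact le_of_lt hd₂'
      rw [← hn₃] at this
      linarith
    have hnBle' : (nB:ℝ) ≤ L*(6*ρ+2+L) + 2 := by linarith [hs12, hnBle]
    have hNe : (N:ℝ) = (n₁:ℝ) + nB + n₃ := by rw [hN]; push_cast; ring
    have hexp : L*(6*ρ+2+L) = 6*(L*ρ)+2*L+L^2 := by ring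
    have hexp2 : (6*L+2)*ρ = 6*(L*ρ)+2*ρ := by ring
    rw [hNe, hexp2]
    rw [hexp] at hnBle'
    linarith
  -- endgame: ρ ≤ nbR L δ
  set C₁ : ℝ := 6*L+2 with hC₁
  set C₂ : ℝ := L^2+2*L+6 with hC₂
  set A : ℝ := 2*δ*C₁ with hAc
  set B : ℝ := C₁*(2*δ+4*L+1) + C₂ with hBc
  have hC₁0 : 0 ≤ C₁ := by rw [hC₁]; linarith only [hL]
  have hC₂0 : 0 ≤ C₂ := by rw [hC₂]; linarith only [sq_nonneg L, hL]
  have hA0 : 0 ≤ A := by rw [hAc]; positivity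
  have hB0 : 0 ≤ B := by
    rw [hBc]
    have := mul_nonneg hC₁0 (by linarith : (0:ℝ) ≤ 2*δ+4*L+1)
    linarith
  have hfin : ρ ≤ 2*δ*(A + B + 5) + 4*L + 1 := by
    rcases le_or_gt k 4 with hk4 | hk5
    · have hkr : (k:ℝ) ≤ 4 := by exact_mod_cast hk4
      have hδ2 : (0:ℝ) ≤ 2*δ := by linarith
      have h4 : 2*δ*(k:ℝ) ≤ 2*δ*4 := mul_le_mul_of_nonneg_left hkr hδ2
      have h5 : 2*δ*4 ≤ 2*δ*(A+B+5) := mul_le_mul_of_nonneg_left (by linarith) hδ2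
      linarith
    · -- k ≥ 5
      have hN2 : 1 < N := by
        by_contra hc
        have hNe : N = 1 := by omega
        rw [hNe] at hk
        simp [Nat.clog_one_right] at hk
        omega
      have hpow : 2^(k-1) < N := by
        have := Nat.pow_pred_clog_lt_self (by norm_num : 1 < 2) hN2
        rwa [← hk] at this
      set m : ℕ := k - 1 with hm
      have hm4 : 4 ≤ m := by omega
      have hsq : m^2 ≤ 2^m := nb_sq_le_two_pow hm4
      have hmn : (m:ℝ)^2 < (N:ℝ) := by
        have h1 : (m^2 : ℕ) < N := lt_of_le_of_lt hsq hpow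
        exact_mod_cast h1
      have hkm : (k:ℝ) = (m:ℝ) + 1 := by
        have : k = m + 1 := by omega
        rw [this]; push_cast; ring
      have hρk : ρ ≤ 2*δ*((m:ℝ)+1) + 4*L + 1 := by rw [← hkm]; linarith
      have hmb : (m:ℝ)^2 ≤ A*(m:ℝ) + B := by
        have h1 : (N:ℝ) ≤ C₁*ρ + C₂ := hB
        have h2 : C₁*ρ ≤ C₁*(2*δ*((m:ℝ)+1) + 4*L + 1) := mul_le_mul_of_nonneg_left hρk hC₁0
        have h3 : C₁*(2*δ*((m:ℝ)+1) + 4*L + 1) + C₂ = A*(m:ℝ) + B := by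
          rw [hAc, hBc]; ring
        linarith
      have hm1 : (1:ℝ) ≤ (m:ℝ) := by exact_mod_cast (by omega : 1 ≤ m)
      have hm0 : (0:ℝ) < (m:ℝ) := by linarith
      have hBm : B*1 ≤ B*(m:ℝ) := mul_le_mul_of_nonneg_left hm1 hB0
      have hmm : (m:ℝ)*(m:ℝ) ≤ (A+B)*(m:ℝ) := by linarith only [hmb, hBm]
      have hmAB : (m:ℝ) ≤ A + B := le_of_mul_le_mul_right hmm hm0
      have hδ2 : (0:ℝ) ≤ 2*δ := by linarith
      have h6 : 2*δ*((m:ℝ)+1) ≤ 2*δ*(A+B+5) := mul_le_mul_of_nonneg_left (by linarith) hδ2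
      linarith
  calc ρ ≤ 2*δ*(A + B + 5) + 4*L + 1 := hfin
  _ = nbR L δ := by rw [nbR, hAc, hBc, hC₁, hC₂]

set_option maxHeartbeats 1000000 in
/-- **No backtracking for quasigeodesics in hyperbolic spaces**
(Lemma `no backtracking hyper`). -/
theorem no_backtracking_hyper (L δ : ℝ) (hL : 1 ≤ L) (hδ : 0 ≤ δ) :
    ∃ M : ℝ, 0 < M ∧
      ∀ (X : Type*) [MetricSpace X], IsGeodesicSpace X → DeltaHyperbolic δ X →
        ∀ a : ℝ, 0 ≤ a → ∀ q : ℝ → X, IsQGOn L L (Set.Icc 0 a) q →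
          ∀ t ∈ Set.Icc (0 : ℝ) a,
            Metric.diam (q '' Set.Icc 0 a) ≤ dist (q 0) (q t) + 1 →
            a - t < M := by
  have hL0 : (0:ℝ) < L := by linarith
  set R₁ : ℝ := nbR L δ + 1 with hR₁
  have hR₁0 : (0:ℝ) ≤ R₁ := by
    have := nbR_nonneg hL hδ
    rw [hR₁]; linarith
  set Dmax : ℝ := 2*(L^2*(2*R₁+δ+L) + L + R₁) + 4*δ + 3 with hDmax
  have hDmax0 : (0:ℝ) ≤ Dmax := by
    have h1 : (0:ℝ) ≤ L^2*(2*R₁+δ+L) := by positivity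
    rw [hDmax]; linarith
  refine ⟨L*(Dmax + L) + 1, by nlinarith, ?_⟩
  intro X _ hgeo hhyp a ha q hq t ht hdiam
  -- the image is bounded
  have hbdd : Bornology.IsBounded (q '' Set.Icc 0 a) := by
    apply (Metric.isBounded_closedBall (x := q 0) (r := L*a+L)).subset
    rintro _ ⟨s, hs, rfl⟩
    rw [Metric.mem_closedBall]
    have := (hq s hs 0 ⟨le_rfl, ha⟩).2
    have habs : |s - 0| ≤ a := by
      rw [sub_zero, abs_of_nonneg hs.1]; exact hs.2
    have : dist (q s) (q 0) ≤ L * a + L := by nlinarith [this]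
    exact this
  have hd0 : dist (q 0) (q a) ≤ dist (q 0) (q t) + 1 := by
    refine le_trans ?_ hdiam
    exact Metric.dist_le_diam_of_mem hbdd (Set.mem_image_of_mem _ ⟨le_rfl, ha⟩)
      (Set.mem_image_of_mem _ ⟨ha, le_rfl⟩)
  set r : ℝ := dist (q 0) (q t) with hr
  set d0 : ℝ := dist (q 0) (q a) with hd0def
  set D : ℝ := dist (q t) (q a) with hD
  have hDlow : (a - t)/L - L ≤ D := by
    have := (hq t ht a ⟨ha, le_rfl⟩).1
    have habs : |t - a| = a - t := by
      rw [abs_sub_comm, abs_of_nonneg (by linarith [ht.2])]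
    rw [habs] at this
    exact this
  suffices hDb : D ≤ Dmax by
    have : (a - t)/L ≤ Dmax + L := by linarith
    have h2 : a - t ≤ L*(Dmax + L) := by
      calc a - t = ((a-t)/L)*L := by field_simp
      _ ≤ (Dmax + L)*L := mul_le_mul_of_nonneg_right this (le_of_lt hL0)
      _ = L*(Dmax+L) := by ring
    linarith
  -- main argument
  have hβ : D ≤ 2*((r + D - d0)/2) + 1 := by
    have : d0 ≤ r + 1 := hd0
    linarith
  set β : ℝ := (r + D - d0)/2 with hβdef
  set x : ℝ := β - (2*δ+1) with hx
  rcases le_or_gt x 0 with hx0 | hx0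
  · -- small case
    have : D ≤ 4*δ + 3 := by
      have : β ≤ 2*δ+1 := by rw [hx] at hx0; linarith
      linarith
    have h1 : (0:ℝ) ≤ L^2*(2*R₁+δ+L) := by positivity
    rw [hDmax]
    linarith
  · -- main case
    have hβD : β ≤ D := by
      have := dist_triangle (q 0) (q a) (q t)
      rw [dist_comm (q a) (q t)] at this
      rw [hβdef]
      linarith
    have hxmem : x ∈ Set.Icc (0:ℝ) (dist (q t) (q a)) := by
      rw [← hD]
      constructor
      · linarith
      · rw [hx]; linarith
    obtain ⟨f, hf⟩ := hgeo (q t) (q a)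
    obtain ⟨g, hg⟩ := hgeo (q a) (q 0)
    obtain ⟨h, hh⟩ := hgeo (q t) (q 0)
    obtain ⟨p, hp, hdp⟩ := hhyp (q t) (q a) (q 0) f g h hf hg hh x hxmem
    -- distances of v := f x to the endpoints
    have hvt : dist (q t) (f x) = x := by
      obtain ⟨hf0, hf1, hfiso⟩ := hf
      have h0m : (0:ℝ) ∈ Set.Icc (0:ℝ) (dist (q t) (q a)) := ⟨le_rfl, dist_nonneg⟩
      have := hfiso 0 h0m x hxmem
      rw [hf0] at this
      rw [this, abs_sub_comm, sub_zero, abs_of_nonneg hxmem.1]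
    have hva : dist (f x) (q a) = D - x := by
      obtain ⟨hf0, hf1, hfiso⟩ := hf
      have hdm : dist (q t) (q a) ∈ Set.Icc (0:ℝ) (dist (q t) (q a)) := ⟨dist_nonneg, le_rfl⟩
      have := hfiso x hxmem _ hdm
      rw [hf1] at this
      rw [this, abs_sub_comm, abs_of_nonneg (by rw [← hD] at hxmem ⊢; linarith [hxmem.2])]
    rcases hp with hpg | hph
    · -- impossible case: p on the side from q a to q 0
      exfalso
      obtain ⟨σ, hσ, rfl⟩ := hpg
      obtain ⟨hg0, hg1, hgiso⟩ := hg
      have e1 : dist (g σ) (q a) = σ := by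
        have h0m : (0:ℝ) ∈ Set.Icc (0:ℝ) (dist (q a) (q 0)) := ⟨le_rfl, dist_nonneg⟩
        have := hgiso σ hσ 0 h0m
        rw [hg0] at this
        rw [this, sub_zero, abs_of_nonneg hσ.1]
      have e2 : dist (g σ) (q 0) = dist (q a) (q 0) - σ := by
        have hdm : dist (q a) (q 0) ∈ Set.Icc (0:ℝ) (dist (q a) (q 0)) := ⟨dist_nonneg, le_rfl⟩
        have := hgiso σ hσ _ hdm
        rw [hg1] at this
        rw [this, abs_sub_comm, abs_of_nonneg (by linarith [hσ.2])]
      have ed0 : dist (q a) (q 0) = d0 := by rw [hd0def, dist_comm]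
      -- σ is large
      have hσlow : D - x - δ ≤ σ := by
        have h1 := dist_triangle (f x) (g σ) (q a)
        rw [e1, hva] at h1
        linarith [hdp]
      -- q 0 is close to g σ
      have hq0v : r - x ≤ dist (q 0) (f x) := by
        have := dist_triangle (q 0) (f x) (q t)
        rw [dist_comm (f x) (q t)] at this
        rw [← hr] at this
        linarith [hvt, this]
      have hq0v' : dist (q 0) (f x) ≤ (d0 - σ) + δ := by
        have h1 := dist_triangle (q 0) (g σ) (f x)
        rw [dist_comm (q 0) (g σ), dist_comm (g σ) (f x)] at h1
        rw [e2, ed0] at h1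
        linarith [hdp, h1]
      have : r + D - d0 ≤ 2*x + 2*δ := by linarith
      rw [hx, hβdef] at this
      linarith
    · -- p on the side from q t to q 0 : the real case
      obtain ⟨σ, hσ, rfl⟩ := hph
      -- apply the tracking lemma on [t, a]
      have hsub : Set.Icc t a ⊆ Set.Icc (0:ℝ) a := fun s hs => ⟨le_trans ht.1 hs.1, hs.2⟩
      have hqta : IsQGOn L L (Set.Icc t a) q := fun s hs s' hs' => hq s (hsub hs) s' (hsub hs')
      obtain ⟨s₂, hs₂, hds₂⟩ := nb_geodesic_near_qg hL hδ hgeo hhyp ht.2 hqta hf x hxmem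
      -- apply the tracking lemma on [0, t] reversed
      set qr : ℝ → X := fun s => q (t - s) with hqr
      have hqrqg : IsQGOn L L (Set.Icc (0:ℝ) t) qr := by
        intro s hs s' hs'
        have hm1 : t - s ∈ Set.Icc (0:ℝ) a := ⟨by linarith [hs.2], by linarith [hs.1, ht.2]⟩
        have hm2 : t - s' ∈ Set.Icc (0:ℝ) a := ⟨by linarith [hs'.2], by linarith [hs'.1, ht.2]⟩
        have := hq (t - s) hm1 (t - s') hm2
        have habs : |t - s - (t - s')| = |s - s'| := by
          rw [abs_sub_comm]
          congr 1
          ring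
        rw [habs] at this
        exact this
      have hhgeo' : IsGeodesicFrom h (qr 0) (qr t) := by
        have e0 : qr 0 = q t := by rw [hqr]; simp
        have e1 : qr t = q 0 := by rw [hqr]; simp
        rw [e0, e1]
        exact hh
      have hσ' : σ ∈ Set.Icc (0:ℝ) (dist (qr 0) (qr t)) := by
        have e0 : qr 0 = q t := by rw [hqr]; simp
        have e1 : qr t = q 0 := by rw [hqr]; simp
        rw [e0, e1]
        exact hσ
      obtain ⟨sr, hsr, hdsr⟩ := nb_geodesic_near_qg hL hδ hgeo hhyp ht.1 hqrqg hhgeo' σ hσ'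
      set s₁ : ℝ := t - sr with hs₁def
      have hs₁ : s₁ ∈ Set.Icc (0:ℝ) t := ⟨by linarith [hsr.2], by linarith [hsr.1]⟩
      have hds₁ : dist (h σ) (q s₁) ≤ R₁ := hdsr
      -- distance between the two quasigeodesic points
      have hd12 : dist (q s₁) (q s₂) ≤ 2*R₁ + δ := by
        calc dist (q s₁) (q s₂) ≤ dist (q s₁) (h σ) + dist (h σ) (f x) + dist (f x) (q s₂) :=
          dist_triangle4 _ _ _ _
        _ ≤ R₁ + δ + R₁ := by
            rw [dist_comm (q s₁) (h σ), dist_comm (h σ) (f x)]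
            linarith [hds₁, hdp, hds₂]
        _ = 2*R₁ + δ := by ring
      -- parameter bound
      have hs12 : s₂ - s₁ ≤ L*(2*R₁ + δ + L) := by
        have hm1 : s₁ ∈ Set.Icc (0:ℝ) a := ⟨hs₁.1, le_trans hs₁.2 ht.2⟩
        have hm2 : s₂ ∈ Set.Icc (0:ℝ) a := hsub hs₂
        have := (hq s₁ hm1 s₂ hm2).1
        have habs : s₂ - s₁ ≤ |s₁ - s₂| := by
          rw [abs_sub_comm]
          exact le_abs_self _
        have h2 : |s₁ - s₂| ≤ L*(2*R₁ + δ + L) := by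
          have h3 : |s₁ - s₂|/L ≤ 2*R₁ + δ + L := by linarith
          calc |s₁ - s₂| = (|s₁ - s₂|/L)*L := by field_simp
          _ ≤ (2*R₁+δ+L)*L := mul_le_mul_of_nonneg_right h3 (le_of_lt hL0)
          _ = L*(2*R₁+δ+L) := by ring
        linarith
      -- q s₂ is close in parameter to t, but far in distance
      have hts₂ : dist (q t) (q s₂) ≤ L*(s₂ - t) + L := by
        have hm2 : s₂ ∈ Set.Icc (0:ℝ) a := hsub hs₂
        have := (hq t ht s₂ hm2).2
        have habs : |t - s₂| = s₂ - t := by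
          rw [abs_sub_comm, abs_of_nonneg (by linarith [hs₂.1])]
        rw [habs] at this
        exact this
      have hfar : x - R₁ ≤ dist (q t) (q s₂) := by
        have h1 := dist_triangle (q t) (q s₂) (f x)
        have h2 : dist (q s₂) (f x) = dist (f x) (q s₂) := dist_comm _ _
        linarith [hvt, hds₂, h1, h2, hR₁.le, hR₁.ge]
      have hst : s₂ - t ≤ L*(2*R₁ + δ + L) := by
        have : s₁ ≤ t := hs₁.2
        linarith
      have hxb : x ≤ L*(L*(2*R₁+δ+L)) + L + R₁ := by
        have h4 : L*(s₂ - t) ≤ L*(L*(2*R₁+δ+L)) :=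
          mul_le_mul_of_nonneg_left hst (le_of_lt hL0)
        linarith
      have hXB : x ≤ L^2*(2*R₁+δ+L) + L + R₁ := by
        have : L*(L*(2*R₁+δ+L)) = L^2*(2*R₁+δ+L) := by ring
        linarith [hxb, this.le, this.ge]
      have : D ≤ 2*x + 4*δ + 3 := by
        have he : 2*β = 2*x + 4*δ + 2 := by rw [hx]; ring
        linarith [hβ, he]
      rw [hDmax]
      linarith
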